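/- Let 𝒩, Λ be channels into a bipartite system ℂ^d ⊗ ℂ^d, let λ ≥ 0 satisfy that λΛ − 𝒩 is a positive map, and suppose every output Λ(ρ) has fully entangled fraction at most f. Then for any M and any families of orthonormal maximally entangled states {|Φ_m⟩} (inputs) and {|Φ′_m⟩} (decoders), (1/M) Σ_m ⟨Φ′_m| 𝒩(|Φ_m⟩⟨Φ_m|) |Φ′_m⟩ ≤ λ f. In particular, if this average exceeds 1 − ε, then 1 − ε ≤ λ f. -/

import Mathlib

open scoped BigOperators Kronecker ENNReal NNReal ComplexOrder
open Matrix

noncomputable section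

/-- A density matrix: positive semidefinite with unit trace. -/
def IsDensity {ι : Type*} [Fintype ι] (ρ : Matrix ι ι ℂ) : Prop :=
  ρ.PosSemidef ∧ ρ.trace = 1

/-- A completely positive trace-preserving map, presented by a Kraus decomposition. -/
def IsCPTP {ι κ : Type*} [Fintype ι] [DecidableEq ι] [Fintype κ] [DecidableEq κ]
    (Φ : Matrix ι ι ℂ → Matrix κ κ ℂ) : Prop :=
  ∃ (r : ℕ) (K : Fin r → Matrix κ ι ℂ),
    (∀ M, Φ M = ∑ i, K i * M * (K i)ᴴ) ∧ (∑ i, (K i)ᴴ * K i = 1)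

/-- Ampliation `Φ ⊗ id` of a superoperator, acting on the first tensor factor. -/
def ampL {ι κ α : Type*} (Φ : Matrix ι ι ℂ → Matrix κ κ ℂ) :
    Matrix (ι × α) (ι × α) ℂ → Matrix (κ × α) (κ × α) ℂ :=
  fun M => Matrix.of fun p q =>
    Φ (Matrix.of fun i j => M (i, p.2) (j, q.2)) p.1 q.1

/-- Ampliation `id ⊗ Λ` of a superoperator, acting on the second tensor factor. -/
def ampR {ι κ α : Type*} (Λ : Matrix ι ι ℂ → Matrix κ κ ℂ) :
    Matrix (α × ι) (α × ι) ℂ → Matrix (α × κ) (α × κ) ℂ :=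
  fun M => Matrix.of fun p q =>
    Λ (Matrix.of fun i j => M (p.1, i) (q.1, j)) p.2 q.2

/-- Tensor product `Φ ⊗ Λ` of superoperators. -/
def tensorMap {ι κ ι' κ' : Type*} (Φ : Matrix ι ι ℂ → Matrix κ κ ℂ)
    (Λ : Matrix ι' ι' ℂ → Matrix κ' κ' ℂ) :
    Matrix (ι × ι') (ι × ι') ℂ → Matrix (κ × κ') (κ × κ') ℂ :=
  fun M => ampL Φ (ampR Λ M)

/-- Trace norm `‖M‖₁ = tr √(MᴴM)`. -/
def traceNorm {ι : Type*} [Fintype ι] [DecidableEq ι] (M : Matrix ι ι ℂ) : ℝ :=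
  (((Matrix.posSemidef_conjTranspose_mul_self M).1.eigenvectorUnitary : Matrix ι ι ℂ) *
    Matrix.diagonal (((↑) : ℝ → ℂ) ∘ Real.sqrt ∘ (Matrix.posSemidef_conjTranspose_mul_self M).1.eigenvalues) *
    (star (Matrix.posSemidef_conjTranspose_mul_self M).1.eigenvectorUnitary : Matrix ι ι ℂ)).trace.re

/-- Diamond norm: supremum over finite-dimensional ancillas and joint states of the
trace norm of the ampliated output. -/
def diamondNorm {ι κ : Type*} [Fintype ι] [DecidableEq ι] [Fintype κ] [DecidableEq κ]
    (Φ : Matrix ι ι ℂ → Matrix κ κ ℂ) : ℝ :=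
  ⨆ a : ℕ, ⨆ ρ : {ρ : Matrix (ι × Fin a) (ι × Fin a) ℂ // IsDensity ρ},
    traceNorm (ampL Φ (α := Fin a) ρ.1)

/-- A maximally entangled unit vector on `ℂ^d ⊗ ℂ^d`: `(U ⊗ I)|Ψ⁺_d⟩` for a unitary `U`. -/
def IsMaxEnt {d : ℕ} (v : Fin d × Fin d → ℂ) : Prop :=
  ∃ U : Matrix (Fin d) (Fin d) ℂ, Uᴴ * U = 1 ∧
    ∀ p q, v (p, q) = U p q / (Real.sqrt d : ℂ)

/-- Fully entangled fraction `F(ρ) = max_{|Φ⟩ max. entangled} ⟨Φ|ρ|Φ⟩`. -/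
def fef {d : ℕ} (ρ : Matrix (Fin d × Fin d) (Fin d × Fin d) ℂ) : ℝ :=
  ⨆ v : {v : Fin d × Fin d → ℂ // IsMaxEnt v},
    (dotProduct (star v.1) (ρ.mulVec v.1)).re

/-- Orthonormality of a family of vectors. -/
def OrthonormalFam {ι d : Type*} [Fintype d] [DecidableEq ι] (Φ : ι → (d → ℂ)) : Prop :=
  ∀ m n, dotProduct (star (Φ m)) (Φ n) = if m = n then 1 else 0

-- Auxiliary lemmas --------------------------------------------------------

lemma aux_outer_posSemidef {n : Type*} [Fintype n] (v : n → ℂ) :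
    (Matrix.vecMulVec v (star v)).PosSemidef := by
  refine posSemidef_iff_dotProduct_mulVec.mpr ⟨?_, ?_⟩
  · ext i j
    simp [vecMulVec, conjTranspose_apply, mul_comm]
  · intro x
    have h : star x ⬝ᵥ (vecMulVec v (star v)) *ᵥ x
        = star (star v ⬝ᵥ x) * (star v ⬝ᵥ x) := by
      simp [dotProduct, mulVec, vecMulVec, Finset.mul_sum, Finset.sum_mul, mul_comm,
        mul_left_comm, mul_assoc, map_sum]
      rw [Finset.sum_comm]
    rw [h]
    exact star_mul_self_nonneg _

lemma aux_outer_trace {n : Type*} [Fintype n] (v : n → ℂ) :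
    (Matrix.vecMulVec v (star v)).trace = dotProduct (star v) v := by
  simp [Matrix.trace, Matrix.diag, vecMulVec, dotProduct, mul_comm]

lemma aux_sum_posSemidef {n ι : Type*} [Fintype n] (s : Finset ι)
    (A : ι → Matrix n n ℂ) (h : ∀ i ∈ s, (A i).PosSemidef) :
    (∑ i ∈ s, A i).PosSemidef := by
  classical
  induction s using Finset.induction_on with
  | empty => simpa using Matrix.PosSemidef.zero
  | insert _ _ hx ih =>
    rw [Finset.sum_insert hx]
    exact (h _ (Finset.mem_insert_self _ _)).add
      (ih fun i hi => h i (Finset.mem_insert_of_mem hi))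

lemma aux_maxEnt_entry_le {d : ℕ} (hd : 0 < d) (v : Fin d × Fin d → ℂ)
    (hv : IsMaxEnt v) : ∀ i, ‖v i‖ ≤ 1 := by
  obtain ⟨U, hU, hvU⟩ := hv
  rintro ⟨p, q⟩
  have hUq : ∑ r, Complex.normSq (U r q) = 1 := by
    have h1 := congrFun (congrFun hU q) q
    have h3 : (Uᴴ * U) q q = ∑ r, (Complex.normSq (U r q) : ℂ) := by
      simp [Matrix.mul_apply, conjTranspose_apply, Complex.normSq_eq_conj_mul_self]
    rw [h3] at h1
    have h2 : ((1 : Matrix (Fin d) (Fin d) ℂ) q q) = 1 := by simp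
    rw [h2] at h1
    have := congrArg Complex.re h1
    push_cast at this
    simpa using this
  have hle : Complex.normSq (U p q) ≤ 1 := by
    rw [← hUq]
    exact Finset.single_le_sum (f := fun r => Complex.normSq (U r q))
      (fun i _ => Complex.normSq_nonneg _) (Finset.mem_univ p)
  have hUpq : ‖U p q‖ ≤ 1 := by
    have h0 := norm_nonneg (U p q)
    have h4 : ‖U p q‖ ^ 2 ≤ 1 := by
      rw [← Complex.sq_norm] at hle; simpa using hle
    nlinarith
  have hs1 : (1 : ℝ) ≤ Real.sqrt d := by
    rw [show (1:ℝ) = Real.sqrt 1 by simp]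
    exact Real.sqrt_le_sqrt (by exact_mod_cast hd)
  rw [hvU p q, norm_div]
  have h5 : ‖((Real.sqrt d : ℝ) : ℂ)‖ = Real.sqrt d := by
    simp [Complex.norm_real, abs_of_nonneg (Real.sqrt_nonneg _)]
  rw [h5]
  calc ‖U p q‖ / Real.sqrt d ≤ 1 / 1 :=
        div_le_div₀ one_pos.le hUpq one_pos hs1
    _ = 1 := by norm_num

lemma aux_quad_le {n : Type*} [Fintype n] (σ : Matrix n n ℂ) (v : n → ℂ)
    (hv : ∀ i, ‖v i‖ ≤ 1) :
    (dotProduct (star v) (σ.mulVec v)).re ≤ ∑ i, ∑ j, ‖σ i j‖ := by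
  calc (dotProduct (star v) (σ.mulVec v)).re
      ≤ ‖dotProduct (star v) (σ.mulVec v)‖ := Complex.re_le_norm _
    _ ≤ ∑ i, ‖star v i * σ.mulVec v i‖ := by
        rw [dotProduct]; exact norm_sum_le _ _
    _ ≤ ∑ i, ∑ j, ‖σ i j‖ := by
        apply Finset.sum_le_sum
        intro i _
        rw [norm_mul]
        have h1 : ‖star v i‖ ≤ 1 := by simpa using hv i
        have h2 : ‖σ.mulVec v i‖ ≤ ∑ j, ‖σ i j‖ := by
          rw [Matrix.mulVec, dotProduct]
          calc ‖∑ j, σ i j * v j‖ ≤ ∑ j, ‖σ i j * v j‖ := norm_sum_le _ _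
            _ ≤ ∑ j, ‖σ i j‖ := by
                apply Finset.sum_le_sum
                intro j _
                rw [norm_mul]
                calc ‖σ i j‖ * ‖v j‖ ≤ ‖σ i j‖ * 1 :=
                      mul_le_mul_of_nonneg_left (hv j) (norm_nonneg _)
                  _ = ‖σ i j‖ := mul_one _
        calc ‖star v i‖ * ‖σ.mulVec v i‖ ≤ 1 * (∑ j, ‖σ i j‖) :=
              mul_le_mul h1 h2 (norm_nonneg _) one_pos.le
          _ = ∑ j, ‖σ i j‖ := one_mul _

lemma aux_le_fef {d : ℕ} (hd : 0 < d) (σ : Matrix (Fin d × Fin d) (Fin d × Fin d) ℂ)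
    (v : Fin d × Fin d → ℂ) (hv : IsMaxEnt v) :
    (dotProduct (star v) (σ.mulVec v)).re ≤ fef σ := by
  have hbdd : BddAbove (Set.range fun w : {w : Fin d × Fin d → ℂ // IsMaxEnt w} =>
      (dotProduct (star w.1) (σ.mulVec w.1)).re) := by
    refine ⟨∑ i, ∑ j, ‖σ i j‖, ?_⟩
    rintro x ⟨⟨w, hw⟩, rfl⟩
    exact aux_quad_le σ w (aux_maxEnt_entry_le hd w hw)
  exact le_ciSup hbdd ⟨v, hv⟩

/-- If `λΛ − 𝒩` is a positive map and every output of `Λ` has fully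
entangled fraction at most `f`, then for orthonormal maximally entangled input and
decoding families, the average success probability is at most `λf`; in particular, if it
exceeds `1 − ε` then `1 − ε ≤ λf`. -/
theorem maxEnt_success_le_fef_bound {e d M : ℕ} (hM : 0 < M)
    (𝒩 Λ : Matrix (Fin e × Fin e) (Fin e × Fin e) ℂ →
      Matrix (Fin d × Fin d) (Fin d × Fin d) ℂ)
    (h𝒩 : IsCPTP 𝒩) (hΛ : IsCPTP Λ) (l : ℝ) (hl : 0 ≤ l)
    (hpos : ∀ ρ : Matrix (Fin e × Fin e) (Fin e × Fin e) ℂ, ρ.PosSemidef →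
      (l • Λ ρ - 𝒩 ρ).PosSemidef)
    (f : ℝ)
    (hfef : ∀ ρ : Matrix (Fin e × Fin e) (Fin e × Fin e) ℂ, IsDensity ρ →
      fef (Λ ρ) ≤ f)
    (Φ : Fin M → (Fin e × Fin e → ℂ)) (hΦME : ∀ m, IsMaxEnt (Φ m))
    (hΦON : OrthonormalFam Φ)
    (Φ' : Fin M → (Fin d × Fin d → ℂ)) (hΦ'ME : ∀ m, IsMaxEnt (Φ' m))
    (hΦ'ON : OrthonormalFam Φ') :
    ((M : ℝ)⁻¹ * ∑ m, (dotProduct (star (Φ' m))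
        ((𝒩 (Matrix.vecMulVec (Φ m) (star (Φ m)))).mulVec (Φ' m))).re ≤ l * f) ∧
    (∀ ε : ℝ, 1 - ε ≤ (M : ℝ)⁻¹ * ∑ m, (dotProduct (star (Φ' m))
        ((𝒩 (Matrix.vecMulVec (Φ m) (star (Φ m)))).mulVec (Φ' m))).re →
      1 - ε ≤ l * f) := by
  classical
  set m0 : Fin M := ⟨0, hM⟩ with hm0
  have hd : 0 < d := by
    rcases Nat.eq_zero_or_pos d with h0 | hd
    · exfalso
      have h1 := hΦ'ON m0 m0
      subst h0
      simp [dotProduct] at h1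
    · exact hd
  have key : ∀ m, (dotProduct (star (Φ' m))
      ((𝒩 (Matrix.vecMulVec (Φ m) (star (Φ m)))).mulVec (Φ' m))).re ≤ l * f := by
    intro m
    set ρ := Matrix.vecMulVec (Φ m) (star (Φ m)) with hρdef
    have hρpsd : ρ.PosSemidef := aux_outer_posSemidef _
    have hρden : IsDensity ρ := by
      refine ⟨hρpsd, ?_⟩
      rw [hρdef, aux_outer_trace]
      simpa using hΦON m m
    have hq := (hpos ρ hρpsd).dotProduct_mulVec_nonneg (Φ' m)
    have hexp : dotProduct (star (Φ' m)) ((l • Λ ρ - 𝒩 ρ).mulVec (Φ' m))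
        = (l : ℂ) * dotProduct (star (Φ' m)) ((Λ ρ).mulVec (Φ' m))
          - dotProduct (star (Φ' m)) ((𝒩 ρ).mulVec (Φ' m)) := by
      rw [Matrix.sub_mulVec, dotProduct_sub]
      congr 1
      rw [Matrix.smul_mulVec, dotProduct_smul]
      simp [Complex.real_smul]
    rw [hexp] at hq
    have hre := (Complex.le_def.mp hq).1
    simp only [Complex.sub_re, Complex.mul_re, Complex.ofReal_re, Complex.ofReal_im,
      Complex.zero_re, zero_mul, sub_zero] at hre
    have hfefm : (dotProduct (star (Φ' m)) ((Λ ρ).mulVec (Φ' m))).re ≤ f :=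
      (aux_le_fef hd (Λ ρ) (Φ' m) (hΦ'ME m)).trans (hfef ρ hρden)
    nlinarith [hre, hfefm, hl]
  have hsum : ∑ m, (dotProduct (star (Φ' m))
      ((𝒩 (Matrix.vecMulVec (Φ m) (star (Φ m)))).mulVec (Φ' m))).re ≤ M * (l * f) := by
    calc ∑ m, (dotProduct (star (Φ' m))
          ((𝒩 (Matrix.vecMulVec (Φ m) (star (Φ m)))).mulVec (Φ' m))).re
        ≤ ∑ _m : Fin M, (l * f) := Finset.sum_le_sum fun m _ => key m
      _ = M * (l * f) := by simp [Finset.sum_const, nsmul_eq_mul, Finset.card_univ]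
  have hMpos : (0:ℝ) < M := by exact_mod_cast hM
  have hmain : (M : ℝ)⁻¹ * ∑ m, (dotProduct (star (Φ' m))
      ((𝒩 (Matrix.vecMulVec (Φ m) (star (Φ m)))).mulVec (Φ' m))).re ≤ l * f := by
    calc (M : ℝ)⁻¹ * ∑ m, (dotProduct (star (Φ' m))
          ((𝒩 (Matrix.vecMulVec (Φ m) (star (Φ m)))).mulVec (Φ' m))).re
        ≤ (M : ℝ)⁻¹ * (M * (l * f)) :=
          mul_le_mul_of_nonneg_left hsum (inv_nonneg.mpr hMpos.le)
      _ = l * f := by field_simp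
  exact ⟨hmain, fun ε hε => hε.trans hmain⟩

end
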